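/- Let p_1, ..., p_r be distinct primes and α_1, ..., α_r positive integers such that for every s with 1 ≤ s ≤ r, the product of (α_t + 1) over 1 ≤ t < s is at least p_s − 1 + δ_{r,s} (Kronecker delta; the empty product is 1). Then p_1^{α_1} · p_2^{α_2} ⋯ p_r^{α_r} is a covering number. -/

import Mathlib

/-- A finite set of congruences `(x, m)` covers all the integers. -/
def CoversAll (S : Finset (ℕ × ℕ)) : Prop :=
  ∀ z : ℤ, ∃ c ∈ S, (c.2 : ℤ) ∣ z - (c.1 : ℤ)

/-- The moduli appearing in `S` are pairwise distinct. -/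
def DistinctModuli (S : Finset (ℕ × ℕ)) : Prop :=
  ∀ c ∈ S, ∀ c' ∈ S, c.2 = c'.2 → c = c'

/-- `L` is a covering number: there is a covering system whose moduli are
distinct divisors of `L` greater than `1`. -/
def IsCoveringNumber (L : ℕ) : Prop :=
  ∃ S : Finset (ℕ × ℕ), CoversAll S ∧ DistinctModuli S ∧
    ∀ c ∈ S, 1 < c.2 ∧ c.2 ∣ L

/-- `L` is a primitive covering number. -/
def IsPrimitiveCoveringNumber (L : ℕ) : Prop :=
  IsCoveringNumber L ∧ ∀ d : ℕ, d ∣ L → d ≠ L → ¬ IsCoveringNumber d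

/-- If `q^a ∤ z`, there is a level `j ∈ [1,a]` with `q^(j-1) ∣ z` but `q^j ∤ z`. -/
lemma sun_exists_level (q z : ℤ) : ∀ a : ℕ, ¬ q ^ a ∣ z →
    ∃ j : ℕ, 1 ≤ j ∧ j ≤ a ∧ q ^ (j - 1) ∣ z ∧ ¬ q ^ j ∣ z := by
  intro a
  induction a with
  | zero => intro hz; exact absurd (by simpa using (dvd_refl z).mul_left 1) (by simpa using hz)
  | succ n ih =>
    intro hz
    by_cases h : q ^ n ∣ z
    · exact ⟨n + 1, Nat.le_add_left 1 n, le_refl _, by simpa using h, hz⟩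
    · obtain ⟨j, h1, h2, h3, h4⟩ := ih h
      exact ⟨j, h1, h2.trans (Nat.le_succ n), h3, h4⟩

/-- Cancellation for products `d * P^j` with `P ∤ d`. -/
lemma sun_pp_cancel_aux {P d d' j j' : ℕ} (hP : 0 < P) (hd : ¬ P ∣ d)
    (h : d * P ^ j = d' * P ^ j') (hle : j ≤ j') : j = j' ∧ d = d' := by
  obtain ⟨e, rfl⟩ := Nat.exists_eq_add_of_le hle
  have h2 : d * P ^ j = d' * P ^ e * P ^ j := by rw [h]; ring
  have h3 : d = d' * P ^ e := Nat.eq_of_mul_eq_mul_right (pow_pos hP j) h2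
  rcases Nat.eq_zero_or_pos e with he | he
  · subst he; simpa using h3
  · exfalso
    obtain ⟨e', rfl⟩ : ∃ e', e = e' + 1 := ⟨e - 1, by omega⟩
    exact hd ⟨d' * P ^ e', by rw [h3]; ring⟩

lemma sun_pp_cancel {P d d' j j' : ℕ} (hP : 0 < P) (hd : ¬ P ∣ d) (hd' : ¬ P ∣ d')
    (h : d * P ^ j = d' * P ^ j') : j = j' ∧ d = d' := by
  rcases le_total j j' with hle | hle
  · exact sun_pp_cancel_aux hP hd h hle
  · obtain ⟨h1, h2⟩ := sun_pp_cancel_aux hP hd' h.symm hle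
    exact ⟨h1.symm, h2.symm⟩

/-- The key step: given `M` coprime to the prime `P`, and `k` distinct divisors of `M`
(`k ≥ P - 1`, and `k ≥ P` if `full`), we can produce congruences with distinct moduli,
each dividing `M * P^a` and divisible by `P`, which cover every multiple of `M`
except (if not `full`) the multiples of `M * P^a`. -/
lemma sun_step_core (M P a k : ℕ) (hp : P.Prime) (hM : 0 < M) (hpM : ¬ P ∣ M) (ha : 1 ≤ a)
    (d : ℕ → ℕ) (hdm : ∀ i, i < k → d i ∣ M) (hdi : ∀ i, i < k → ∀ j, j < k → d i = d j → i = j)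
    (full : Bool) (hk1 : P - 1 ≤ k) (hk2 : full = true → P ≤ k) :
    ∃ T : Finset (ℕ × ℕ), DistinctModuli T ∧
      (∀ c ∈ T, 1 < c.2 ∧ c.2 ∣ M * P ^ a ∧ P ∣ c.2) ∧
      ∀ z : ℤ, (M : ℤ) ∣ z → (full = true ∨ ¬ ((M : ℤ) * (P : ℤ) ^ a ∣ z)) →
        ∃ c ∈ T, (c.2 : ℤ) ∣ z - (c.1 : ℤ) := by
  have hP2 : 2 ≤ P := hp.two_le
  have hPM : Nat.Coprime P M := (Nat.Prime.coprime_iff_not_dvd hp).mpr hpM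
  have hco : ∀ j : ℕ, Nat.Coprime M (P ^ j) := fun j => (hPM.pow_left j).symm
  set idx : ℕ → ℕ := fun i => if i = 0 then P - 1 else i - 1 with hidx
  set cr : ℕ → ℕ → ℕ := fun j i => (Nat.chineseRemainder (hco j) 0 (i * P ^ (j - 1))).1 with hcr
  -- basic properties of cr
  have hcrM : ∀ j i, (M : ℤ) ∣ (cr j i : ℤ) := by
    intro j i
    have h1 := (Nat.chineseRemainder (hco j) 0 (i * P ^ (j - 1))).2.1
    have h2 : M ∣ cr j i := (Nat.modEq_zero_iff_dvd).mp h1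
    exact_mod_cast Int.natCast_dvd_natCast.mpr h2
  have hcrP : ∀ (j i : ℕ), ((P : ℤ) ^ j) ∣ ((i : ℤ) * (P : ℤ) ^ (j - 1) - (cr j i : ℤ)) := by
    intro j i
    have h1 := (Nat.chineseRemainder (hco j) 0 (i * P ^ (j - 1))).2.2
    have h2 := (Nat.modEq_iff_dvd).mp h1
    push_cast at h2 ⊢
    exact h2
  set f : ℕ × ℕ → ℕ × ℕ := fun q => (cr q.1 q.2, d (idx q.2) * P ^ q.1) with hf
  set J : Finset (ℕ × ℕ) :=
    (Finset.Icc 1 a ×ˢ Finset.Ico 1 P) ∪ (if full then {(a, 0)} else ∅) with hJ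
  have hJmem : ∀ q ∈ J, 1 ≤ q.1 ∧ q.1 ≤ a ∧ q.2 < P ∧ idx q.2 < k := by
    intro q hq
    rcases Finset.mem_union.mp hq with h | h
    · rw [Finset.mem_product, Finset.mem_Icc, Finset.mem_Ico] at h
      obtain ⟨⟨h1, h2⟩, h3, h4⟩ := h
      refine ⟨h1, h2, h4, ?_⟩
      rw [hidx]; simp only [if_neg (by omega : q.2 ≠ 0)]; omega
    · rw [apply_ite (fun (s : Finset (ℕ × ℕ)) => q ∈ s)] at h
      rcases hfull : full with _ | _
      · rw [hfull] at h; simp at h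
      · rw [hfull] at h; simp only [if_pos, Finset.mem_singleton] at h
        subst h
        have hk := hk2 hfull
        exact ⟨ha, le_refl a, by omega, by rw [hidx]; simp; omega⟩
  have hdnd : ∀ q ∈ J, ¬ P ∣ d (idx q.2) := by
    intro q hq hdvd
    exact hpM (hdvd.trans (hdm _ (hJmem q hq).2.2.2))
  have hkey : ∀ q ∈ J, ∀ q' ∈ J, d (idx q.2) * P ^ q.1 = d (idx q'.2) * P ^ q'.1 → q = q' := by
    intro q hq q' hq' he
    obtain ⟨h1, h2, h3, h4⟩ := hJmem q hq
    obtain ⟨h1', h2', h3', h4'⟩ := hJmem q' hq'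
    obtain ⟨hj, hdd⟩ := sun_pp_cancel (by omega) (hdnd q hq) (hdnd q' hq') he
    have hii : idx q.2 = idx q'.2 := hdi _ h4 _ h4' hdd
    have : q.2 = q'.2 := by
      rw [hidx] at hii
      by_cases hz : q.2 = 0 <;> by_cases hz' : q'.2 = 0 <;>
        simp only [hz, hz', if_pos, if_neg, if_true, if_false] at hii <;> omega
    exact Prod.ext hj this
  refine ⟨J.image f, ?_, ?_, ?_⟩
  · -- DistinctModuli
    intro c hc c' hc' hmod
    obtain ⟨q, hq, rfl⟩ := Finset.mem_image.mp hc
    obtain ⟨q', hq', rfl⟩ := Finset.mem_image.mp hc'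
    rw [hkey q hq q' hq' hmod]
  · -- moduli properties
    intro c hc
    obtain ⟨q, hq, rfl⟩ := Finset.mem_image.mp hc
    obtain ⟨h1, h2, h3, h4⟩ := hJmem q hq
    have hdpos : 0 < d (idx q.2) := Nat.pos_of_dvd_of_pos (hdm _ h4) hM
    refine ⟨?_, ?_, ?_⟩
    · calc 1 < P ^ q.1 := by
            calc 1 < P := by omega
            _ ≤ P ^ q.1 := Nat.le_self_pow (by omega) P
        _ ≤ d (idx q.2) * P ^ q.1 := Nat.le_mul_of_pos_left _ hdpos
    · exact Nat.mul_dvd_mul (hdm _ h4) (Nat.pow_dvd_pow P h2)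
    · exact Dvd.dvd.mul_left (dvd_pow_self P (by omega)) _
  · -- covering
    intro z hz hcase
    by_cases hfin : (M : ℤ) * (P : ℤ) ^ a ∣ z
    · -- use the extra congruence (a, 0); full must be true
      have hfull : full = true := by
        rcases hcase with h | h
        · exact h
        · exact absurd hfin h
      have hqJ : (a, 0) ∈ J := by
        rw [hJ]
        refine Finset.mem_union_right _ ?_
        rw [if_pos hfull]; exact Finset.mem_singleton_self _
      refine ⟨f (a, 0), Finset.mem_image_of_mem f hqJ, ?_⟩
      show ((d (idx 0) * P ^ a : ℕ) : ℤ) ∣ z - (cr a 0 : ℤ)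
      have hcop : IsCoprime ((d (idx 0) : ℤ)) ((P : ℤ) ^ a) := by
        rw [show ((P : ℤ) ^ a) = ((P ^ a : ℕ) : ℤ) by push_cast; ring]
        exact Nat.isCoprime_iff_coprime.mpr
          (Nat.Coprime.coprime_dvd_left (hdm _ (hJmem _ hqJ).2.2.2) (hco a))
      have hdvd1 : (d (idx 0) : ℤ) ∣ z - (cr a 0 : ℤ) := by
        have hM1 : (M : ℤ) ∣ z - (cr a 0 : ℤ) := dvd_sub hz (hcrM a 0)
        exact (Int.natCast_dvd_natCast.mpr (hdm _ (hJmem _ hqJ).2.2.2)).trans hM1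
      have hdvd2 : (P : ℤ) ^ a ∣ z - (cr a 0 : ℤ) := by
        have hP1 : (P : ℤ) ^ a ∣ z := (dvd_mul_left _ _).trans hfin
        have hP2' : (P : ℤ) ^ a ∣ (cr a 0 : ℤ) := by
          have h := hcrP a 0
          simp only [Nat.cast_zero, zero_mul, zero_sub, dvd_neg] at h
          exact h
        exact dvd_sub hP1 hP2'
      have := hcop.mul_dvd hdvd1 hdvd2
      push_cast
      exact this
    · -- generic congruence
      have hcopM : IsCoprime ((M : ℤ)) ((P : ℤ) ^ a) := by
        rw [show ((P : ℤ) ^ a) = ((P ^ a : ℕ) : ℤ) by push_cast; ring]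
        exact Nat.isCoprime_iff_coprime.mpr (hco a)
      have hPa : ¬ (P : ℤ) ^ a ∣ z := fun h => hfin (hcopM.mul_dvd hz h)
      obtain ⟨j, hj1, hj2, hj3, hj4⟩ := sun_exists_level (P : ℤ) z a hPa
      obtain ⟨j', rfl⟩ : ∃ j', j = j' + 1 := ⟨j - 1, by omega⟩
      simp only [Nat.add_sub_cancel] at hj3
      obtain ⟨u, hu⟩ := hj3
      have hpu : ¬ (P : ℤ) ∣ u := by
        intro ⟨v, hv⟩
        apply hj4
        refine ⟨v, ?_⟩
        rw [hu, hv]; ring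
      set i : ℕ := (u % (P : ℤ)).toNat with hi
      have hiP : (i : ℤ) = u % (P : ℤ) := by
        rw [hi]; exact Int.toNat_of_nonneg (Int.emod_nonneg u (by positivity))
      have hilt : i < P := by
        have := Int.emod_lt_of_pos u (show (0:ℤ) < P by positivity)
        omega
      have hipos : 1 ≤ i := by
        rcases Nat.eq_zero_or_pos i with h | h
        · exfalso; apply hpu; apply Int.dvd_of_emod_eq_zero; omega
        · exact h
      have hqJ : (j' + 1, i) ∈ J := by
        rw [hJ]
        exact Finset.mem_union_left _ (Finset.mem_product.mpr
          ⟨Finset.mem_Icc.mpr ⟨hj1, hj2⟩, Finset.mem_Ico.mpr ⟨hipos, hilt⟩⟩)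
      refine ⟨f (j' + 1, i), Finset.mem_image_of_mem f hqJ, ?_⟩
      show ((d (idx i) * P ^ (j' + 1) : ℕ) : ℤ) ∣ z - (cr (j' + 1) i : ℤ)
      have hcop : IsCoprime ((d (idx i) : ℤ)) ((P : ℤ) ^ (j' + 1)) := by
        rw [show ((P : ℤ) ^ (j' + 1)) = ((P ^ (j' + 1) : ℕ) : ℤ) by push_cast; ring]
        exact Nat.isCoprime_iff_coprime.mpr
          (Nat.Coprime.coprime_dvd_left (hdm _ (hJmem _ hqJ).2.2.2) (hco (j' + 1)))
      have hdvd1 : (d (idx i) : ℤ) ∣ z - (cr (j' + 1) i : ℤ) := by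
        have hM1 : (M : ℤ) ∣ z - (cr (j' + 1) i : ℤ) := dvd_sub hz (hcrM (j' + 1) i)
        exact (Int.natCast_dvd_natCast.mpr (hdm _ (hJmem _ hqJ).2.2.2)).trans hM1
      have hdvd2 : (P : ℤ) ^ (j' + 1) ∣ z - (cr (j' + 1) i : ℤ) := by
        have h1 : (P : ℤ) ^ (j' + 1) ∣ z - (i : ℤ) * (P : ℤ) ^ j' := by
          have hPui : (P : ℤ) ∣ u - (i : ℤ) := by
            rw [hiP]; exact Int.ModEq.dvd (Int.mod_modEq u P)
          obtain ⟨w, hw⟩ := hPui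
          refine ⟨w, ?_⟩
          have hu2 : u = (i : ℤ) + (P : ℤ) * w := by linarith
          rw [hu, hu2]; ring
        have h2 := hcrP (j' + 1) i
        simp only [Nat.add_sub_cancel] at h2
        have := dvd_add h1 h2
        rw [show z - (cr (j' + 1) i : ℤ) = z - (i : ℤ) * (P : ℤ) ^ j' + ((i : ℤ) * (P : ℤ) ^ j' - (cr (j' + 1) i : ℤ)) by ring]
        exact this
      have := hcop.mul_dvd hdvd1 hdvd2
      push_cast
      exact this

theorem sun_sufficient_condition_covering_number
    (r : ℕ) (hr : 1 ≤ r) (p α : ℕ → ℕ)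
    (hprime : ∀ i ∈ Finset.Icc 1 r, (p i).Prime)
    (hdistinct : ∀ i ∈ Finset.Icc 1 r, ∀ j ∈ Finset.Icc 1 r, p i = p j → i = j)
    (hpos : ∀ i ∈ Finset.Icc 1 r, 1 ≤ α i)
    (hsun : ∀ s ∈ Finset.Icc 1 r,
      (∏ t ∈ Finset.Ico 1 s, (α t + 1)) ≥ p s - 1 + (if s = r then 1 else 0)) :
    IsCoveringNumber (∏ i ∈ Finset.Icc 1 r, p i ^ α i) := by
  set N : ℕ → ℕ := fun s => ∏ t ∈ Finset.Icc 1 s, p t ^ α t with hN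
  have hN0 : N 0 = 1 := by simp [hN]
  have hNsucc : ∀ s, N (s + 1) = N s * p (s + 1) ^ α (s + 1) := fun s =>
    Finset.prod_Icc_succ_top (Nat.succ_le_succ (Nat.zero_le s)) _
  have hNpos : ∀ s, s ≤ r → 0 < N s := by
    intro s
    induction s with
    | zero => intro _; rw [hN0]; exact Nat.one_pos
    | succ n ih =>
      intro hs
      rw [hNsucc]
      exact Nat.mul_pos (ih (by omega))
        (pow_pos (hprime _ (Finset.mem_Icc.mpr ⟨by omega, hs⟩)).pos _)
  have hpnd : ∀ s, s + 1 ≤ r → ¬ p (s + 1) ∣ N s := by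
    intro s hs hdvd
    have hp := hprime _ (Finset.mem_Icc.mpr ⟨by omega, hs⟩)
    obtain ⟨t, ht, htd⟩ := hp.prime.exists_mem_finset_dvd hdvd
    rw [Finset.mem_Icc] at ht
    have h1 : p (s + 1) ∣ p t := hp.dvd_of_dvd_pow htd
    have hpt := hprime t (Finset.mem_Icc.mpr ⟨ht.1, by omega⟩)
    have h2 : p (s + 1) = p t := (Nat.prime_dvd_prime_iff_eq hp hpt).mp h1
    have h3 := hdistinct _ (Finset.mem_Icc.mpr ⟨by omega, hs⟩) t
      (Finset.mem_Icc.mpr ⟨ht.1, by omega⟩) h2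
    omega
  have hcard : ∀ s, s ≤ r → (N s).divisors.card = ∏ t ∈ Finset.Icc 1 s, (α t + 1) := by
    intro s
    induction s with
    | zero => intro _; rw [hN0]; simp
    | succ n ih =>
      intro hs
      have hp := hprime _ (Finset.mem_Icc.mpr ⟨by omega, hs⟩)
      have hcop : (N n).Coprime (p (n + 1) ^ α (n + 1)) :=
        (((Nat.Prime.coprime_iff_not_dvd hp).mpr (hpnd n hs)).pow_left _).symm
      rw [hNsucc, hcop.card_divisors_mul, ih (by omega),
        Finset.prod_Icc_succ_top (Nat.succ_le_succ (Nat.zero_le n))]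
      congr 1
      rw [Nat.divisors_prime_pow hp]; simp
  -- inductive construction of partial covers
  have main : ∀ s, s < r → ∃ S : Finset (ℕ × ℕ), DistinctModuli S ∧
      (∀ c ∈ S, 1 < c.2 ∧ c.2 ∣ N s) ∧
      ∀ z : ℤ, ((N s : ℕ) : ℤ) ∣ z ∨ ∃ c ∈ S, (c.2 : ℤ) ∣ z - (c.1 : ℤ) := by
    intro s
    induction s with
    | zero =>
      intro _
      exact ⟨∅, by intro c hc; simp at hc, by intro c hc; simp at hc,
        fun z => Or.inl (by rw [hN0]; simp)⟩
    | succ n ih =>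
      intro hlt
      obtain ⟨S, hSd, hSm, hSc⟩ := ih (by omega)
      have hp := hprime (n + 1) (Finset.mem_Icc.mpr ⟨by omega, by omega⟩)
      have hnd := hpnd n (by omega)
      have hkc : p (n + 1) - 1 ≤ (N n).divisors.card := by
        rw [hcard n (by omega)]
        have := hsun (n + 1) (Finset.mem_Icc.mpr ⟨by omega, by omega⟩)
        rw [show Finset.Ico 1 (n + 1) = Finset.Icc 1 n by ext x; simp only [Finset.mem_Ico, Finset.mem_Icc]; omega, if_neg (by omega : ¬ n + 1 = r)] at this
        omega
      set d : ℕ → ℕ := fun i => if h : i < p (n + 1) - 1 then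
        ((N n).divisors.orderEmbOfCardLe hkc ⟨i, h⟩ : ℕ) else 0 with hd
      have hdm : ∀ i, i < p (n + 1) - 1 → d i ∣ N n := by
        intro i hi
        rw [hd]; simp only [dif_pos hi]
        exact (Nat.mem_divisors.mp ((N n).divisors.orderEmbOfCardLe_mem hkc ⟨i, hi⟩)).1
      have hdi : ∀ i, i < p (n + 1) - 1 → ∀ j, j < p (n + 1) - 1 → d i = d j → i = j := by
        intro i hi j hj he
        rw [hd] at he; simp only [dif_pos hi, dif_pos hj] at he
        have h2 := ((N n).divisors.orderEmbOfCardLe hkc).injective he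
        simpa using h2
      obtain ⟨T, hTd, hTm, hTc⟩ := sun_step_core (N n) (p (n + 1)) (α (n + 1))
        (p (n + 1) - 1) hp (hNpos n (by omega)) hnd
        (hpos _ (Finset.mem_Icc.mpr ⟨by omega, by omega⟩)) d hdm hdi
        false (le_refl _) (by intro h; simp at h)
      have hTnotS : ∀ c ∈ S, ∀ c' ∈ T, c.2 ≠ c'.2 := by
        intro c hc c' hc' he
        have h1 : c.2 ∣ N n := (hSm c hc).2
        have h2 : p (n + 1) ∣ c'.2 := (hTm c' hc').2.2
        exact hnd (he ▸ h2 |>.trans h1)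
      refine ⟨S ∪ T, ?_, ?_, ?_⟩
      · intro c hc c' hc' he
        rcases Finset.mem_union.mp hc with h | h <;> rcases Finset.mem_union.mp hc' with h' | h'
        · exact hSd c h c' h' he
        · exact absurd he (hTnotS c h c' h')
        · exact absurd he.symm (hTnotS c' h' c h)
        · exact hTd c h c' h' he
      · intro c hc
        rcases Finset.mem_union.mp hc with h | h
        · refine ⟨(hSm c h).1, (hSm c h).2.trans ?_⟩
          rw [hNsucc]; exact dvd_mul_right _ _
        · exact ⟨(hTm c h).1, by rw [hNsucc]; exact (hTm c h).2.1⟩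
      · intro z
        rcases hSc z with h | h
        · by_cases hfin : ((N n : ℤ)) * ((p (n + 1) : ℤ)) ^ α (n + 1) ∣ z
          · left
            rw [hNsucc]; push_cast; exact hfin
          · right
            obtain ⟨c, hcT, hcd⟩ := hTc z h (Or.inr hfin)
            exact ⟨c, Finset.mem_union_right _ hcT, hcd⟩
        · right
          obtain ⟨c, hcS, hcd⟩ := h
          exact ⟨c, Finset.mem_union_left _ hcS, hcd⟩
  -- final step
  obtain ⟨S, hSd, hSm, hSc⟩ := main (r - 1) (by omega)
  have hrr : r - 1 + 1 = r := by omega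
  have hp := hprime r (Finset.mem_Icc.mpr ⟨hr, le_refl r⟩)
  have hnd : ¬ p r ∣ N (r - 1) := by have := hpnd (r - 1) (by omega); rwa [hrr] at this
  have hkc : p r ≤ (N (r - 1)).divisors.card := by
    rw [hcard (r - 1) (by omega)]
    have := hsun r (Finset.mem_Icc.mpr ⟨hr, le_refl r⟩)
    rw [if_pos rfl] at this
    have h2 : Finset.Ico 1 r = Finset.Icc 1 (r - 1) := by
      ext x; simp only [Finset.mem_Ico, Finset.mem_Icc]; omega
    rw [h2] at this
    have := hp.two_le
    omega
  set d : ℕ → ℕ := fun i => if h : i < p r then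
    ((N (r - 1)).divisors.orderEmbOfCardLe hkc ⟨i, h⟩ : ℕ) else 0 with hd
  have hdm : ∀ i, i < p r → d i ∣ N (r - 1) := by
    intro i hi
    rw [hd]; simp only [dif_pos hi]
    exact (Nat.mem_divisors.mp ((N (r - 1)).divisors.orderEmbOfCardLe_mem hkc ⟨i, hi⟩)).1
  have hdi : ∀ i, i < p r → ∀ j, j < p r → d i = d j → i = j := by
    intro i hi j hj he
    rw [hd] at he; simp only [dif_pos hi, dif_pos hj] at he
    have h2 := ((N (r - 1)).divisors.orderEmbOfCardLe hkc).injective he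
    simpa using h2
  obtain ⟨T, hTd, hTm, hTc⟩ := sun_step_core (N (r - 1)) (p r) (α r) (p r)
    hp (hNpos (r - 1) (by omega)) hnd (hpos r (Finset.mem_Icc.mpr ⟨hr, le_refl r⟩))
    d hdm hdi true (by omega) (fun _ => le_refl _)
  have hTnotS : ∀ c ∈ S, ∀ c' ∈ T, c.2 ≠ c'.2 := by
    intro c hc c' hc' he
    have h1 : c.2 ∣ N (r - 1) := (hSm c hc).2
    have h2 : p r ∣ c'.2 := (hTm c' hc').2.2
    exact hnd (he ▸ h2 |>.trans h1)
  have hNr : N (r - 1) * p r ^ α r = N r := by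
    rw [← hrr, hNsucc, hrr]
  rw [show (∏ i ∈ Finset.Icc 1 r, p i ^ α i) = N r from rfl]
  refine ⟨S ∪ T, ?_, ?_, ?_⟩
  · intro z
    rcases hSc z with h | h
    · obtain ⟨c, hcT, hcd⟩ := hTc z h (Or.inl rfl)
      exact ⟨c, Finset.mem_union_right _ hcT, hcd⟩
    · obtain ⟨c, hcS, hcd⟩ := h
      exact ⟨c, Finset.mem_union_left _ hcS, hcd⟩
  · intro c hc c' hc' he
    rcases Finset.mem_union.mp hc with h | h <;> rcases Finset.mem_union.mp hc' with h' | h'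
    · exact hSd c h c' h' he
    · exact absurd he (hTnotS c h c' h')
    · exact absurd he.symm (hTnotS c' h' c h)
    · exact hTd c h c' h' he
  · intro c hc
    rcases Finset.mem_union.mp hc with h | h
    · refine ⟨(hSm c h).1, (hSm c h).2.trans ?_⟩
      rw [← hNr]; exact dvd_mul_right _ _
    · exact ⟨(hTm c h).1, hNr ▸ (hTm c h).2.1⟩
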